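/- Let (F, ι, μ) be a Set-monad with F(1) ≅ 1, let A₁, A₂ be sets and (p, q) ∈ F(A₁) × F(A₂). With τ : A₁ → F(A₁ × A₂) defined by τ(a) = F(b ↦ (a,b))(q), the element t = μ_{A₁×A₂}(F(τ)(p)) satisfies Fπ₁(t) = p and Fπ₂(t) = q. -/

import Mathlib

open CategoryTheory

universe u

theorem element_t_projects_to_p_and_q
    (F : Type u ⥤ Type u) (ι : 𝟭 (Type u) ⟶ F) (μ : F ⋙ F ⟶ F)
    (unit1 : ∀ X : Type u, μ.app X ∘ ι.app (F.obj X) = id)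
    (unit2 : ∀ X : Type u, μ.app X ∘ F.map (ι.app X) = id)
    (hconn : Nonempty (F.obj (PUnit : Type u) ≃ PUnit))
    (A₁ A₂ : Type u) (p : F.obj A₁) (q : F.obj A₂) :
    F.map (TypeCat.ofHom (Prod.fst : A₁ × A₂ → A₁))
        (μ.app (A₁ × A₂) (F.map (TypeCat.ofHom fun a : A₁ => F.map (TypeCat.ofHom fun b : A₂ => (a, b)) q) p)) = p ∧
    F.map (TypeCat.ofHom (Prod.snd : A₁ × A₂ → A₂))
        (μ.app (A₁ × A₂) (F.map (TypeCat.ofHom fun a : A₁ => F.map (TypeCat.ofHom fun b : A₂ => (a, b)) q) p)) = q := by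
  obtain ⟨e⟩ := hconn
  have hsub : ∀ x y : F.obj (PUnit : Type u), x = y := fun x y =>
    e.injective (Subsingleton.elim _ _)
  -- naturality of ι
  have hι : ∀ {X Y : Type u} (f : X → Y) (x : X),
      F.map (TypeCat.ofHom f) (ι.app X x) = ι.app Y (f x) := by
    intro X Y f x
    exact (FunctorToTypes.naturality (F := 𝟭 (Type u)) (G := F) (φ := ι) (f := TypeCat.ofHom f) (x := x)).symm
  -- constants factor through ι
  have hconst : ∀ {X Y : Type u} (x : F.obj X) (a : Y),
      F.map (TypeCat.ofHom fun _ => a) x = ι.app Y a := by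
    intro X Y x a
    calc F.map (TypeCat.ofHom fun _ : X => a) x
        = F.map (TypeCat.ofHom (fun _ : X => PUnit.unit) ≫ TypeCat.ofHom (fun _ : PUnit => a)) x := rfl
      _ = F.map (TypeCat.ofHom fun _ : PUnit => a) (F.map (TypeCat.ofHom fun _ : X => PUnit.unit) x) :=
          FunctorToTypes.map_comp_apply F _ _ x
      _ = F.map (TypeCat.ofHom fun _ : PUnit => a) (ι.app PUnit PUnit.unit) :=
          congrArg _ (hsub _ _)
      _ = ι.app Y a := hι _ _
  -- naturality of μ
  have hμ : ∀ {X Y : Type u} (f : X → Y) (x : F.obj (F.obj X)),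
      F.map (TypeCat.ofHom f) (μ.app X x) = μ.app Y (F.map (F.map (TypeCat.ofHom f)) x) := by
    intro X Y f x
    exact (FunctorToTypes.naturality (F := F ⋙ F) (G := F) (φ := μ) (f := TypeCat.ofHom f) (x := x)).symm
  set τ : A₁ → F.obj (A₁ × A₂) := fun a : A₁ => F.map (TypeCat.ofHom fun b : A₂ => (a, b)) q with hτ
  have hfst : ∀ a : A₁, F.map (TypeCat.ofHom (Prod.fst : A₁ × A₂ → A₁)) (τ a) = ι.app A₁ a := by
    intro a
    rw [hτ, ← FunctorToTypes.map_comp_apply]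
    exact hconst q a
  have hsnd : ∀ a : A₁, F.map (TypeCat.ofHom (Prod.snd : A₁ × A₂ → A₂)) (τ a) = q := by
    intro a
    rw [hτ, ← FunctorToTypes.map_comp_apply]
    exact FunctorToTypes.map_id_apply F q
  constructor
  · calc F.map (TypeCat.ofHom (Prod.fst : A₁ × A₂ → A₁)) (μ.app (A₁ × A₂) (F.map (TypeCat.ofHom τ) p))
        = μ.app A₁ (F.map (F.map (TypeCat.ofHom Prod.fst)) (F.map (TypeCat.ofHom τ) p)) := hμ _ _
      _ = μ.app A₁ (F.map (TypeCat.ofHom τ ≫ F.map (TypeCat.ofHom Prod.fst)) p) :=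
          congrArg _ (FunctorToTypes.map_comp_apply F _ _ p).symm
      _ = μ.app A₁ (F.map (ι.app A₁) p) := by
          have : TypeCat.ofHom τ ≫ F.map (TypeCat.ofHom Prod.fst) = ι.app A₁ := by
            ext a; exact hfst a
          rw [this]
      _ = p := congrFun (unit2 A₁) p
  · calc F.map (TypeCat.ofHom (Prod.snd : A₁ × A₂ → A₂)) (μ.app (A₁ × A₂) (F.map (TypeCat.ofHom τ) p))
        = μ.app A₂ (F.map (F.map (TypeCat.ofHom Prod.snd)) (F.map (TypeCat.ofHom τ) p)) := hμ _ _
      _ = μ.app A₂ (F.map (TypeCat.ofHom τ ≫ F.map (TypeCat.ofHom Prod.snd)) p) :=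
          congrArg _ (FunctorToTypes.map_comp_apply F _ _ p).symm
      _ = μ.app A₂ (F.map (TypeCat.ofHom fun _ : A₁ => q) p) := by
          have : TypeCat.ofHom τ ≫ F.map (TypeCat.ofHom Prod.snd) = TypeCat.ofHom fun _ : A₁ => q := by
            ext a; exact hsnd a
          rw [this]
      _ = μ.app A₂ (ι.app (F.obj A₂) q) := congrArg _ (hconst p q)
      _ = q := congrFun (unit1 A₂) q
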